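/- The function λ ↦ √(∫_0^∞ x² sech²(x/2) sech²(λx/2) dx) is integrable over ℝ. -/

import Mathlib

open MeasureTheory Set

noncomputable def f0 (x : ℝ) : ℝ := x^2 * (1 / Real.cosh (x/2))^2

lemma sech_le (u : ℝ) : 1 / Real.cosh u ≤ 2 * Real.exp (-u) := by
  rw [div_le_iff₀ (Real.cosh_pos u)]
  rw [Real.cosh_eq]
  rw [Real.exp_neg]
  have h := Real.exp_pos u
  have h2 := Real.exp_pos (-u)
  rw [Real.exp_neg] at h2
  have h3 : Real.exp u * (Real.exp u)⁻¹ = 1 := mul_inv_cancel₀ h.ne'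
  nlinarith [sq_nonneg ((Real.exp u)⁻¹)]

lemma sech_le_one (u : ℝ) : 1 / Real.cosh u ≤ 1 := by
  rw [div_le_one (Real.cosh_pos u)]; exact Real.one_le_cosh u

lemma f0_nonneg (x : ℝ) : 0 ≤ f0 x := by
  unfold f0; positivity

lemma f0_le (x : ℝ) (hx : 0 ≤ x) : f0 x ≤ 4 * (Real.exp (-x) * x ^ 2) := by
  unfold f0
  have h1 : (1 / Real.cosh (x/2))^2 ≤ (2 * Real.exp (-(x/2)))^2 := by
    apply pow_le_pow_left₀ (by positivity) (sech_le _)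
  calc x^2 * (1 / Real.cosh (x/2))^2 ≤ x^2 * (2 * Real.exp (-(x/2)))^2 := by
        apply mul_le_mul_of_nonneg_left h1 (by positivity)
    _ = 4 * (Real.exp (-x) * x ^ 2) := by
        rw [mul_pow, ← Real.exp_nat_mul]
        rw [show ((2:ℕ):ℝ) * -(x/2) = -x by ring]
        ring

lemma master_integrable : IntegrableOn (fun x => 4 * (Real.exp (-x) * x ^ 2)) (Ioi (0:ℝ)) := by
  have h := Real.GammaIntegral_convergent (s := 3) (by norm_num)
  have h2 : IntegrableOn (fun x : ℝ => Real.exp (-x) * x ^ 2) (Ioi (0:ℝ)) := by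
    apply h.congr_fun _ measurableSet_Ioi
    intro x hx
    simp only
    rw [show (3:ℝ) - 1 = ((2:ℕ):ℝ) by norm_num, Real.rpow_natCast]
  exact h2.const_mul 4

lemma cont_sech : Continuous (fun u : ℝ => 1 / Real.cosh u) :=
  continuous_const.div Real.continuous_cosh (fun x => (Real.cosh_pos x).ne')

lemma cont_f0 : Continuous f0 := by
  unfold f0
  exact ((continuous_pow 2).mul (((cont_sech.comp (continuous_id.div_const 2))).pow 2))

lemma f0_integrable : IntegrableOn f0 (Ioi (0:ℝ)) := by
  apply master_integrable.mono' ((cont_f0).aestronglyMeasurable)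
  filter_upwards [ae_restrict_mem measurableSet_Ioi] with x hx
  rw [Real.norm_of_nonneg (f0_nonneg x)]
  exact f0_le x (le_of_lt hx)

noncomputable def ff (lam x : ℝ) : ℝ :=
  x^2 * (1 / Real.cosh (x/2))^2 * (1 / Real.cosh (lam * x/2))^2

lemma ff_nonneg (lam x : ℝ) : 0 ≤ ff lam x := by unfold ff; positivity

lemma ff_le_f0 (lam x : ℝ) : ff lam x ≤ f0 x := by
  unfold ff f0
  have h1 : (1 / Real.cosh (lam * x/2))^2 ≤ 1 := by
    have := sech_le_one (lam * x/2)
    have h0 : 0 ≤ 1 / Real.cosh (lam * x/2) := by positivity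
    nlinarith
  nlinarith [f0_nonneg x, sq_nonneg (1 / Real.cosh (x/2)), sq_nonneg x,
    mul_nonneg (sq_nonneg x) (sq_nonneg (1 / Real.cosh (x/2)))]

lemma ff_integrable (lam : ℝ) : IntegrableOn (ff lam) (Ioi (0:ℝ)) := by
  have hc : Continuous (ff lam) := by
    unfold ff
    exact (((continuous_pow 2).mul
      ((cont_sech.comp (continuous_id.div_const 2)).pow 2)).mul
      ((cont_sech.comp ((continuous_const.mul continuous_id).div_const 2)).pow 2))
  apply f0_integrable.mono' hc.aestronglyMeasurable
  filter_upwards with x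
  rw [Real.norm_of_nonneg (ff_nonneg lam x)]
  exact ff_le_f0 lam x

noncomputable def C0 : ℝ := ∫ x in Ioi (0:ℝ), f0 x

lemma C0_nonneg : 0 ≤ C0 :=
  setIntegral_nonneg measurableSet_Ioi (fun x _ => f0_nonneg x)

lemma F_le_C0 (lam : ℝ) : (∫ x in Ioi (0:ℝ), ff lam x) ≤ C0 :=
  setIntegral_mono_on (ff_integrable lam) f0_integrable measurableSet_Ioi
    (fun x _ => ff_le_f0 lam x)

lemma g2_integrable {b : ℝ} (hb : 1 ≤ b) :
    IntegrableOn (fun x => x^2 * (1 / Real.cosh (b * x/2))^2) (Ioi (0:ℝ)) := by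
  have hc : Continuous (fun x : ℝ => x^2 * (1 / Real.cosh (b * x/2))^2) :=
    (continuous_pow 2).mul
      ((cont_sech.comp ((continuous_const.mul continuous_id).div_const 2)).pow 2)
  apply master_integrable.mono' hc.aestronglyMeasurable
  filter_upwards [ae_restrict_mem measurableSet_Ioi] with x hx
  have hx0 : (0:ℝ) < x := hx
  rw [Real.norm_of_nonneg (by positivity)]
  have h1 : (1 / Real.cosh (b*x/2))^2 ≤ (2 * Real.exp (-(b*x/2)))^2 :=
    pow_le_pow_left₀ (by positivity) (sech_le _) 2
  have h2 : Real.exp (-(b*x)) ≤ Real.exp (-x) := by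
    apply Real.exp_le_exp.mpr
    nlinarith
  calc x^2 * (1 / Real.cosh (b*x/2))^2 ≤ x^2 * (2 * Real.exp (-(b*x/2)))^2 := by
        apply mul_le_mul_of_nonneg_left h1 (by positivity)
    _ = 4 * (Real.exp (-(b*x)) * x^2) := by
        rw [mul_pow, ← Real.exp_nat_mul, show ((2:ℕ):ℝ) * -(b*x/2) = -(b*x) by ring]
        ring
    _ ≤ 4 * (Real.exp (-x) * x^2) := by nlinarith [sq_nonneg x]

lemma substitution {b : ℝ} (hb : 0 < b) :
    (∫ x in Ioi (0:ℝ), x^2 * (1 / Real.cosh (b * x/2))^2) = (b^2)⁻¹ * (b⁻¹ * C0) := by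
  have heq : (fun x : ℝ => x^2 * (1 / Real.cosh (b * x/2))^2)
      = fun x => (b^2)⁻¹ * f0 (b * x) := by
    funext x
    unfold f0
    rw [mul_pow]
    field_simp
  rw [heq, integral_const_mul,
    integral_comp_mul_left_Ioi f0 0 hb, mul_zero, smul_eq_mul]
  rfl

lemma F_abs (lam : ℝ) :
    (∫ x in Ioi (0:ℝ), ff lam x) = ∫ x in Ioi (0:ℝ), ff |lam| x := by
  apply setIntegral_congr_fun measurableSet_Ioi
  intro x hx
  have hx0 : (0:ℝ) < x := hx
  unfold ff
  congr 3
  rw [← Real.cosh_abs (lam * x / 2), abs_div, abs_mul, abs_of_pos hx0]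
  norm_num

lemma key (lam : ℝ) :
    Real.sqrt (∫ x in Ioi (0:ℝ), ff lam x)
      ≤ Real.sqrt C0 * (max 1 |lam|) ^ (-(3:ℝ)/2) := by
  rcases le_or_gt |lam| 1 with h | h
  · rw [max_eq_left h, Real.one_rpow, mul_one]
    exact Real.sqrt_le_sqrt (F_le_C0 lam)
  · have hb : 1 ≤ |lam| := h.le
    have hb0 : (0:ℝ) < |lam| := lt_trans one_pos h
    set b := |lam| with hbdef
    rw [max_eq_right hb]
    set c := b ^ (-(3:ℝ)/2) with hcdef
    have hc0 : 0 ≤ c := Real.rpow_nonneg hb0.le _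
    have hc2 : c ^ 2 = (b^2)⁻¹ * b⁻¹ := by
      have h1 : c ^ 2 = b ^ (-(3:ℝ)) := by
        rw [hcdef, ← Real.rpow_natCast (b ^ (-(3:ℝ)/2)) 2, ← Real.rpow_mul hb0.le]
        norm_num
      rw [h1, show (-(3:ℝ)) = -((3:ℕ):ℝ) by norm_num, Real.rpow_neg hb0.le,
        Real.rpow_natCast]
      rw [pow_succ, mul_inv]
    have hle : (∫ x in Ioi (0:ℝ), ff lam x) ≤ c^2 * C0 := by
      rw [F_abs lam]
      have h1 : (∫ x in Ioi (0:ℝ), ff b x)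
          ≤ ∫ x in Ioi (0:ℝ), x^2 * (1 / Real.cosh (b * x/2))^2 := by
        apply setIntegral_mono_on (ff_integrable b) (g2_integrable hb) measurableSet_Ioi
        intro x _
        unfold ff
        have h2 : (1 / Real.cosh (x/2))^2 ≤ 1 := by
          have := sech_le_one (x/2)
          have h0 : 0 ≤ 1 / Real.cosh (x/2) := by positivity
          nlinarith
        nlinarith [sq_nonneg x, sq_nonneg (1 / Real.cosh (b * x/2)),
          mul_nonneg (sq_nonneg x) (sq_nonneg (1 / Real.cosh (b * x/2)))]
      rw [substitution hb0] at h1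
      calc (∫ x in Ioi (0:ℝ), ff b x) ≤ (b^2)⁻¹ * (b⁻¹ * C0) := h1
        _ = c^2 * C0 := by rw [hc2]; ring
    calc Real.sqrt (∫ x in Ioi (0:ℝ), ff lam x) ≤ Real.sqrt (c^2 * C0) :=
          Real.sqrt_le_sqrt hle
      _ = Real.sqrt C0 * c := by
          rw [Real.sqrt_mul (sq_nonneg c), Real.sqrt_sq hc0, mul_comm]

lemma bound_int : Integrable (fun lam : ℝ => (max 1 |lam|) ^ (-(3:ℝ)/2)) := by
  have hIoi : IntegrableOn (fun lam : ℝ => (max 1 |lam|) ^ (-(3:ℝ)/2)) (Ioi 1) := by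
    apply (integrableOn_Ioi_rpow_of_lt (by norm_num : -(3:ℝ)/2 < -1) one_pos).congr_fun
      _ measurableSet_Ioi
    intro x hx
    dsimp only
    rw [abs_of_pos (lt_trans one_pos hx), max_eq_right (le_of_lt hx)]
  have hIcc : IntegrableOn (fun lam : ℝ => (max 1 |lam|) ^ (-(3:ℝ)/2)) (Icc (-1) 1) := by
    have hconst : IntegrableOn (fun _ : ℝ => (1:ℝ)) (Icc (-1:ℝ) 1) :=
      (integrableOn_const_iff).mpr (Or.inr measure_Icc_lt_top)
    apply hconst.congr_fun _ measurableSet_Icc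
    intro x hx
    dsimp only
    rw [max_eq_left (abs_le.mpr ⟨hx.1, hx.2⟩), Real.one_rpow]
  have hIio : IntegrableOn (fun lam : ℝ => (max 1 |lam|) ^ (-(3:ℝ)/2)) (Iio (-1)) := by
    have h_map : (volume.restrict (Ioi (1:ℝ))).map Neg.neg
        = volume.restrict (Iio (-1:ℝ)) := by
      conv => rhs; rw [← Measure.map_neg_eq_self (volume : Measure ℝ),
        measurableEmbedding_neg.restrict_map]
      congr 1
      ext x
      simp
    rw [IntegrableOn, ← h_map, measurableEmbedding_neg.integrable_map_iff]
    apply hIoi.congr_fun _ measurableSet_Ioi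
    intro x _
    simp [abs_neg]
  rw [← integrableOn_univ, ← Iio_union_Ici (a := (-1:ℝ)),
    ← Icc_union_Ioi_eq_Ici (by norm_num : (-1:ℝ) ≤ 1), integrableOn_union,
    integrableOn_union]
  exact ⟨hIio, hIcc, hIoi⟩

theorem skew_logistic_jeffreys_integrable :
    Integrable (fun lam : ℝ =>
      Real.sqrt (∫ x in Ioi (0:ℝ),
        x^2 * (1 / Real.cosh (x/2))^2 * (1 / Real.cosh (lam * x/2))^2)) := by
  have hf_cont : Continuous (fun p : ℝ × ℝ =>
      p.2^2 * (1 / Real.cosh (p.2/2))^2 * (1 / Real.cosh (p.1*p.2/2))^2) :=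
    ((continuous_snd.pow 2).mul
      ((cont_sech.comp (continuous_snd.div_const 2)).pow 2)).mul
      ((cont_sech.comp ((continuous_fst.mul continuous_snd).div_const 2)).pow 2)
  have hmeas : AEStronglyMeasurable (fun lam : ℝ =>
      Real.sqrt (∫ x in Ioi (0:ℝ),
        x^2 * (1 / Real.cosh (x/2))^2 * (1 / Real.cosh (lam * x/2))^2)) volume :=
    (Real.continuous_sqrt.comp_stronglyMeasurable
      (hf_cont.stronglyMeasurable.integral_prod_right'
        (ν := volume.restrict (Ioi 0)))).aestronglyMeasurable
  apply Integrable.mono' (bound_int.const_mul (Real.sqrt C0)) hmeas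
  filter_upwards with lam
  rw [Real.norm_of_nonneg (Real.sqrt_nonneg _)]
  exact key lam
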